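/- Let f : ℕ → ℝ be a probability mass function on ℕ (f(n) ≥ 0 for all n and Σ_{n∈ℕ} f(n) = 1) satisfying f(0) ≥ f(1). Then for every real r, the characteristic function satisfies |Σ_{n∈ℕ} f(n) e^{i r n}| ≤ f(1)·|1 + e^{i r}| + (1 − 2 f(1)); equivalently, |Σ_{n∈ℕ} f(n) e^{i r n}| ≤ 1 − 2 f(1)(1 − |cos(r/2)|). -/

import Mathlib

/-- For a probability mass function `f` on `ℕ` with `f(0) ≥ f(1)`, the
characteristic function satisfies
`|∑ f(n) e^{irn}| ≤ f(1)·|1 + e^{ir}| + (1 − 2 f(1))` for every real `r`. -/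
theorem pmf_charFun_bound (f : ℕ → ℝ)
    (hf0 : ∀ n, 0 ≤ f n) (hf1 : (∑' n : ℕ, f n) = 1) (hmono : f 1 ≤ f 0) (r : ℝ) :
    ‖∑' n : ℕ, (f n : ℂ) * Complex.exp (Complex.I * r * n)‖ ≤
      f 1 * ‖1 + Complex.exp (Complex.I * r)‖ + (1 - 2 * f 1) := by
  set g : ℕ → ℂ := fun n => (f n : ℂ) * Complex.exp (Complex.I * r * n) with hg
  have hsum : Summable f := by
    by_contra h
    rw [tsum_eq_zero_of_not_summable h] at hf1
    norm_num at hf1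
  have hnorm : ∀ n, ‖g n‖ = f n := by
    intro n
    have : Complex.I * r * n = ((r * n : ℝ) : ℂ) * Complex.I := by push_cast; ring
    simp only [hg, norm_mul, this, Complex.norm_exp_ofReal_mul_I]
    rw [Complex.norm_real, Real.norm_of_nonneg (hf0 n), mul_one]
  have hsumC : Summable g := by
    apply Summable.of_norm
    simpa only [hnorm] using hsum
  have hsum2 : Summable (fun n => f (n + 2)) := (summable_nat_add_iff 2).mpr hsum
  have hsumC2 : Summable (fun n => g (n + 2)) := (summable_nat_add_iff 2).mpr hsumC
  have hsplit : ∑' n, g n = g 0 + (g 1 + ∑' n, g (n + 2)) := by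
    rw [Summable.tsum_eq_zero_add hsumC, Summable.tsum_eq_zero_add ((summable_nat_add_iff 1).mpr hsumC)]
  have hsplitR : ∑' n, f (n + 2) = 1 - f 0 - f 1 := by
    have := Summable.tsum_eq_zero_add hsum
    rw [Summable.tsum_eq_zero_add ((summable_nat_add_iff 1).mpr hsum)] at this
    rw [hf1] at this
    linarith
  have htail : ‖∑' n, g (n + 2)‖ ≤ 1 - f 0 - f 1 := by
    rw [← hsplitR]
    calc ‖∑' n, g (n + 2)‖ ≤ ∑' n, ‖g (n + 2)‖ := norm_tsum_le_tsum_norm (by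
          simpa only [hnorm] using hsum2)
      _ = ∑' n, f (n + 2) := by simp only [hnorm]
  have hg0 : g 0 = (f 0 : ℂ) := by simp [hg]
  have hg1 : g 1 = (f 1 : ℂ) * Complex.exp (Complex.I * r) := by simp [hg]
  have hhead : ‖g 0 + g 1‖ ≤
      (f 0 - f 1) + f 1 * ‖1 + Complex.exp (Complex.I * r)‖ := by
    rw [hg0, hg1]
    have : (f 0 : ℂ) + (f 1 : ℂ) * Complex.exp (Complex.I * r)
        = ((f 0 - f 1 : ℝ) : ℂ) + (f 1 : ℂ) * (1 + Complex.exp (Complex.I * r)) := by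
      push_cast; ring
    rw [this]
    calc ‖_‖ ≤ ‖((f 0 - f 1 : ℝ) : ℂ)‖
          + ‖(f 1 : ℂ) * (1 + Complex.exp (Complex.I * r))‖ :=
        norm_add_le _ _
      _ = (f 0 - f 1) + f 1 * ‖1 + Complex.exp (Complex.I * r)‖ := by
        rw [norm_mul, Complex.norm_real, Complex.norm_real,
          Real.norm_of_nonneg (by linarith), Real.norm_of_nonneg (hf0 1)]
  calc ‖∑' n, g n‖ = ‖(g 0 + g 1) + ∑' n, g (n + 2)‖ := by
        rw [hsplit, add_assoc]
    _ ≤ ‖g 0 + g 1‖ + ‖∑' n, g (n + 2)‖ := norm_add_le _ _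
    _ ≤ ((f 0 - f 1) + f 1 * ‖1 + Complex.exp (Complex.I * r)‖)
        + (1 - f 0 - f 1) := add_le_add hhead htail
    _ = f 1 * ‖1 + Complex.exp (Complex.I * r)‖ + (1 - 2 * f 1) := by ring
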